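/- Let 0 < α ≤ α' ≤ 1, let F₀, F_a : ℝ → ℝ be monotone nondecreasing functions with F₀(x) → 0 and F_a(x) → 0 as x → −∞ and F₀(x) → 1 and F_a(x) → 1 as x → +∞. Set Fₘ(x) = (1−α)·F₀(x) + α·F_a(x) and F'_a(x) = (Fₘ(x) − (1−α')·F₀(x)) / α'. Then F'_a is monotone nondecreasing, F'_a(x) → 0 as x → −∞, and F'_a(x) → 1 as x → +∞ (i.e., F'_a is a legal CDF). -/

import Mathlib

open Filter

/-- If `F₀` and `F_a` are legal CDFs (monotone nondecreasing with limit 0 at −∞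
and limit 1 at +∞), then `F'_a(x) = (Fₘ(x) − (1−α')·F₀(x)) / α'` is also a
legal CDF, for any `0 < α ≤ α' ≤ 1`. -/
theorem overestimate_alien_cdf_is_legal_cdf
    (α α' : ℝ) (hα : 0 < α) (hαα' : α ≤ α') (hα' : α' ≤ 1)
    (F₀ Fa : ℝ → ℝ)
    (hF₀mono : Monotone F₀) (hFamono : Monotone Fa)
    (hF₀bot : Tendsto F₀ atBot (nhds 0)) (hFabot : Tendsto Fa atBot (nhds 0))
    (hF₀top : Tendsto F₀ atTop (nhds 1)) (hFatop : Tendsto Fa atTop (nhds 1))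
    (Fₘ : ℝ → ℝ) (hFₘ : ∀ x, Fₘ x = (1 - α) * F₀ x + α * Fa x)
    (F'a : ℝ → ℝ) (hF'a : ∀ x, F'a x = (Fₘ x - (1 - α') * F₀ x) / α') :
    Monotone F'a ∧ Tendsto F'a atBot (nhds 0) ∧ Tendsto F'a atTop (nhds 1) := by
  have hα'pos : 0 < α' := lt_of_lt_of_le hα hαα'
  have key : ∀ x, F'a x = ((α' - α) * F₀ x + α * Fa x) / α' := by
    intro x
    rw [hF'a, hFₘ]; ring
  refine ⟨?_, ?_, ?_⟩
  · intro x y hxy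
    rw [key, key]
    have h1 : (α' - α) * F₀ x ≤ (α' - α) * F₀ y :=
      mul_le_mul_of_nonneg_left (hF₀mono hxy) (sub_nonneg.mpr hαα')
    have h2 : α * Fa x ≤ α * Fa y := mul_le_mul_of_nonneg_left (hFamono hxy) hα.le
    exact div_le_div_of_nonneg_right (add_le_add h1 h2) hα'pos.le
  · have : Tendsto (fun x => ((α' - α) * F₀ x + α * Fa x) / α') atBot (nhds 0) := by
      have := (((hF₀bot.const_mul (α' - α)).add (hFabot.const_mul α)).div_const α')
      simpa using this
    exact this.congr fun x => (key x).symm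
  · have : Tendsto (fun x => ((α' - α) * F₀ x + α * Fa x) / α') atTop (nhds 1) := by
      have := (((hF₀top.const_mul (α' - α)).add (hFatop.const_mul α)).div_const α')
      have h : ((α' - α) * 1 + α * 1) / α' = 1 := by field_simp; ring
      simpa only [h] using this
    exact this.congr fun x => (key x).symm
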